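/- Let U and Y be complex Hilbert spaces, F a closed subspace of U, and ω = (ω₁, ω₂) : F → Y ⊕ U a contraction. Define H_n : U → Y by H_n u = ω₁ (Π_F ω₂)ⁿ Π_F u for n ≥ 0. Then (H_n)_{n≥0} is a solution of the H² interpolation problem defined by ω; in particular, the map Γ_{H_c} : U → ℓ²(ℕ, Y), u ↦ (ω₁ (Π_F ω₂)ⁿ Π_F u)_{n≥0}, is well defined and a contraction, H₀ f = ω₁ f for all f ∈ F, and H_{n+1} f = H_n (ω₂ f) for all f ∈ F and all n ≥ 0. (This is the central solution, corresponding to the function H_c(λ) = ω₁ Π_F (I − λ ω₂ Π_F)^{-1}.) -/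

import Mathlib

open scoped ENNReal

lemma key' {U Y : Type*}
    [NormedAddCommGroup U] [InnerProductSpace ℂ U] [CompleteSpace U]
    [NormedAddCommGroup Y] [InnerProductSpace ℂ Y] [CompleteSpace Y]
    (F : Submodule ℂ U) [CompleteSpace F]
    (ω₁ : F →L[ℂ] Y) (ω₂ : F →L[ℂ] U)
    (hcontr : ∀ f : F, ‖ω₁ f‖ ^ 2 + ‖ω₂ f‖ ^ 2 ≤ ‖f‖ ^ 2) (f : F) (N : ℕ) :
    ∑ n ∈ Finset.range N, ‖ω₁ ((((F.orthogonalProjection).comp ω₂) ^ n) f)‖ ^ 2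
      + ‖(((F.orthogonalProjection).comp ω₂) ^ N) f‖ ^ 2 ≤ ‖f‖ ^ 2 := by
  set T := (F.orthogonalProjection).comp ω₂ with hT
  induction N with
  | zero => simp
  | succ N ih =>
    rw [Finset.sum_range_succ]
    have h1 : ‖(T ^ (N+1)) f‖ ≤ ‖ω₂ ((T ^ N) f)‖ := by
      rw [pow_succ']
      show ‖(F.orthogonalProjection) (ω₂ ((T ^ N) f))‖ ≤ _
      calc ‖(F.orthogonalProjection) (ω₂ ((T ^ N) f))‖
          ≤ ‖F.orthogonalProjection‖ * ‖ω₂ ((T ^ N) f)‖ :=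
            (F.orthogonalProjection).le_opNorm _
        _ ≤ 1 * ‖ω₂ ((T ^ N) f)‖ := by
            gcongr; exact Submodule.orthogonalProjectionOnto_norm_le F
        _ = ‖ω₂ ((T ^ N) f)‖ := one_mul _
    have h2 := hcontr ((T ^ N) f)
    have h3 : ‖(T ^ (N+1)) f‖ ^ 2 ≤ ‖ω₂ ((T ^ N) f)‖ ^ 2 := by
      have := norm_nonneg ((T ^ (N+1)) f); nlinarith
    linarith

/-- A solution of the `H²` interpolation problem defined by the contraction
`ω = (ω₁, ω₂) : F → Y ⊕ U`, identified with its sequence of Taylor coefficients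
`Hn : ℕ → (U →L[ℂ] Y)`. -/
def IsH2Solution {U Y : Type*}
    [NormedAddCommGroup U] [InnerProductSpace ℂ U] [CompleteSpace U]
    [NormedAddCommGroup Y] [InnerProductSpace ℂ Y] [CompleteSpace Y]
    (F : Submodule ℂ U) (ω₁ : F →L[ℂ] Y) (ω₂ : F →L[ℂ] U)
    (Hn : ℕ → (U →L[ℂ] Y)) : Prop :=
  (∃ Γ : U →L[ℂ] lp (fun _ : ℕ => Y) 2, ‖Γ‖ ≤ 1 ∧ ∀ (u : U) (n : ℕ), Γ u n = Hn n u) ∧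
  (∀ f : F, Hn 0 f = ω₁ f) ∧
  (∀ (f : F) (n : ℕ), Hn (n + 1) f = Hn n (ω₂ f))

theorem stmt_2
    {U Y : Type*}
    [NormedAddCommGroup U] [InnerProductSpace ℂ U] [CompleteSpace U]
    [NormedAddCommGroup Y] [InnerProductSpace ℂ Y] [CompleteSpace Y]
    (F : Submodule ℂ U) [CompleteSpace F]
    (ω₁ : F →L[ℂ] Y) (ω₂ : F →L[ℂ] U)
    (hcontr : ∀ f : F, ‖ω₁ f‖ ^ 2 + ‖ω₂ f‖ ^ 2 ≤ ‖f‖ ^ 2) :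
    IsH2Solution F ω₁ ω₂ (fun n =>
      (ω₁.comp (((F.orthogonalProjection).comp ω₂) ^ n)).comp (F.orthogonalProjection)) := by
  set T := (F.orthogonalProjection).comp ω₂ with hT
  have htoReal : (2 : ℝ≥0∞).toReal = 2 := by norm_num
  -- sum bound over arbitrary finsets
  have hsum : ∀ (u : U) (s : Finset ℕ),
      ∑ n ∈ s, ‖ω₁ ((T ^ n) (F.orthogonalProjection u))‖ ^ (2:ℝ) ≤ ‖u‖ ^ (2:ℝ) := by
    intro u s
    obtain ⟨N, hN⟩ := s.exists_nat_subset_range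
    have hproj : ‖(F.orthogonalProjection u : U)‖ ≤ ‖u‖ := by
      calc ‖(F.orthogonalProjection u : U)‖ ≤ ‖F.orthogonalProjection‖ * ‖u‖ :=
            (F.orthogonalProjection).le_opNorm u
        _ ≤ 1 * ‖u‖ := by gcongr; exact Submodule.orthogonalProjectionOnto_norm_le F
        _ = ‖u‖ := one_mul _
    have h1 : ∑ n ∈ s, ‖ω₁ ((T ^ n) (F.orthogonalProjection u))‖ ^ 2
        ≤ ∑ n ∈ Finset.range N, ‖ω₁ ((T ^ n) (F.orthogonalProjection u))‖ ^ 2 :=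
      Finset.sum_le_sum_of_subset_of_nonneg hN (fun i _ _ => by positivity)
    have h2 := key' F ω₁ ω₂ hcontr (F.orthogonalProjection u) N
    have h3 : ‖(F.orthogonalProjection u : F)‖ ^ 2 ≤ ‖u‖ ^ 2 := by
      have h4 : ‖(F.orthogonalProjection u : F)‖ = ‖(F.orthogonalProjection u : U)‖ := rfl
      rw [h4]; have := norm_nonneg (F.orthogonalProjection u : U); nlinarith
    have h5 := sq_nonneg ‖(T ^ N) (F.orthogonalProjection u)‖
    have hgoal : ∑ n ∈ s, ‖ω₁ ((T ^ n) (F.orthogonalProjection u))‖ ^ 2 ≤ ‖u‖ ^ 2 := by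
      linarith
    calc ∑ n ∈ s, ‖ω₁ ((T ^ n) (F.orthogonalProjection u))‖ ^ (2:ℝ)
        = ∑ n ∈ s, ‖ω₁ ((T ^ n) (F.orthogonalProjection u))‖ ^ (2:ℕ) := by
          refine Finset.sum_congr rfl fun n _ => ?_
          rw [← Real.rpow_natCast]; norm_num
      _ ≤ ‖u‖ ^ (2:ℕ) := hgoal
      _ = ‖u‖ ^ (2:ℝ) := by rw [← Real.rpow_natCast]; norm_num
  have hmem : ∀ u : U, Memℓp (fun n => ω₁ ((T ^ n) (F.orthogonalProjection u))) 2 := by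
    intro u
    apply memℓp_gen' (C := ‖u‖ ^ (2:ℝ))
    intro s
    simpa [htoReal] using hsum u s
  set L : U →ₗ[ℂ] lp (fun _ : ℕ => Y) 2 :=
    { toFun := fun u => ⟨fun n => ω₁ ((T ^ n) (F.orthogonalProjection u)), hmem u⟩
      map_add' := fun u v => by
        apply lp.ext; funext n; simp [lp.coeFn_add]; rfl
      map_smul' := fun c u => by
        apply lp.ext; funext n; simp [lp.coeFn_smul] } with hL
  have hbound : ∀ u : U, ‖L u‖ ≤ 1 * ‖u‖ := by
    intro u
    rw [one_mul]
    apply lp.norm_le_of_forall_sum_le (by norm_num [htoReal]) (norm_nonneg u)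
    intro s
    simpa [htoReal, hL] using hsum u s
  refine ⟨⟨L.mkContinuous 1 hbound, L.mkContinuous_norm_le one_pos.le hbound,
    fun u n => rfl⟩, fun f => ?_, fun f n => ?_⟩
  · simp [Submodule.orthogonalProjectionOnto_mem_subspace_eq_self]
  · show ω₁ ((T ^ (n+1)) (F.orthogonalProjection f)) = ω₁ ((T ^ n) (F.orthogonalProjection (ω₂ f)))
    congr 1
    rw [pow_succ]
    show (T ^ n) (T (F.orthogonalProjection f)) = _
    congr 1
    rw [Submodule.orthogonalProjectionOnto_mem_subspace_eq_self]
    rfl
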